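/- For the lifted trines ensemble with parameter α ∈ [0,1] and rotation R by 120 degrees about the first axis, the orbit sum of Π = |Ψ(a,b)⟩⟨Ψ(a,b)| satisfies ∑_{i=0}^{2} R^i Π R^{-i} = diag(3cos²(a), (3/2)(1−cos²(a)), (3/2)(1−cos²(a))). Consequently, for orbits generated by parameters (a,b) and (c,d), the combination λ·C₁ + (1−λ)·C₂ of the two orbits sums to the identity I₃ if and only if λcos²(a) + (1−λ)cos²(c) = 1/3. -/
import Mathlib


open Real

noncomputable def Rm : Matrix (Fin 3) (Fin 3) ℝ :=
  !![1, 0, 0; 0, -(1/2), Real.sqrt 3 / 2; 0, -(Real.sqrt 3 / 2), -(1/2)]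

noncomputable def Rv : Matrix (Fin 3) (Fin 3) ℝ :=
  !![1, 0, 0; 0, -(1/2), -(Real.sqrt 3 / 2); 0, Real.sqrt 3 / 2, -(1/2)]

lemma h3' : Real.sqrt 3 * Real.sqrt 3 = 3 := Real.mul_self_sqrt (by norm_num)

lemma Rm_mul_Rv : Rm * Rv = 1 := by
  ext i j
  fin_cases i <;> fin_cases j <;>
    simp [Rm, Rv, Matrix.mul_apply, Fin.sum_univ_three, Matrix.one_apply,
      Matrix.vecHead, Matrix.vecTail] <;>
    nlinarith [h3']

lemma Rm_inv : Rm⁻¹ = Rv := Matrix.inv_eq_right_inv Rm_mul_Rv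

lemma Rm_sq : Rm * Rm = Rv := by
  ext i j
  fin_cases i <;> fin_cases j <;>
    simp [Rm, Rv, Matrix.mul_apply, Fin.sum_univ_three, Matrix.vecHead,
      Matrix.vecTail] <;>
    nlinarith [h3']

lemma Rv_sq : Rv * Rv = Rm := by
  ext i j
  fin_cases i <;> fin_cases j <;>
    simp [Rm, Rv, Matrix.mul_apply, Fin.sum_univ_three, Matrix.vecHead,
      Matrix.vecTail] <;>
    nlinarith [h3']

set_option maxHeartbeats 2000000 in
lemma orbit (a b : ℝ) :
    ∑ i : Fin 3, Rm ^ (i : ℕ) * Matrix.vecMulVec ![Real.cos a, Real.sin a * Real.cos b,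
      Real.sin a * Real.sin b] ![Real.cos a, Real.sin a * Real.cos b,
      Real.sin a * Real.sin b] * (Rm⁻¹) ^ (i : ℕ)
      = Matrix.diagonal ![3 * Real.cos a ^ 2,
          3 / 2 * (1 - Real.cos a ^ 2), 3 / 2 * (1 - Real.cos a ^ 2)] := by
  have hs : Real.sin a ^ 2 = 1 - Real.cos a ^ 2 := Real.sin_sq a
  have hsb : Real.sin b ^ 2 = 1 - Real.cos b ^ 2 := Real.sin_sq b
  rw [Fin.sum_univ_three, Rm_inv]
  show 1 * _ * 1 + Rm ^ 1 * _ * Rv ^ 1 + Rm ^ 2 * _ * Rv ^ 2 = _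
  rw [pow_one, pow_one, pow_two, pow_two, Rm_sq, Rv_sq, one_mul, mul_one]
  ext i j
  fin_cases i <;> fin_cases j <;>
    simp [Rm, Rv, Matrix.mul_apply, Fin.sum_univ_three, Matrix.vecMulVec_apply,
      Matrix.vecHead, Matrix.vecTail, Matrix.diagonal, Matrix.add_apply] <;>
    first
      | nlinarith [h3', hs, hsb]
      | linear_combination (-(1/2) * Real.sin a ^ 2 * Real.sin b * Real.cos b) * h3'

/-- Orbit-sum computation for the lifted trines: the orbit sum of
`Π = |Ψ(a,b)⟩⟨Ψ(a,b)|` under the rotation `R` by 120° is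
`diag(3cos²a, (3/2)(1−cos²a), (3/2)(1−cos²a))`; consequently the combination
`λC₁ + (1−λ)C₂` of two orbits sums to `I₃` iff
`λcos²a + (1−λ)cos²c = 1/3`. -/
theorem stmt17 (R : Matrix (Fin 3) (Fin 3) ℝ)
    (hR : R = !![1, 0, 0; 0, -(1/2), Real.sqrt 3 / 2; 0, -(Real.sqrt 3 / 2), -(1/2)])
    (Ψ : ℝ → ℝ → Fin 3 → ℝ)
    (hΨ : ∀ a b, Ψ a b = ![Real.cos a, Real.sin a * Real.cos b,
      Real.sin a * Real.sin b]) :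
    (∀ a b : ℝ,
      ∑ i : Fin 3, R ^ (i : ℕ) * Matrix.vecMulVec (Ψ a b) (Ψ a b) * (R⁻¹) ^ (i : ℕ)
        = Matrix.diagonal ![3 * Real.cos a ^ 2,
            3 / 2 * (1 - Real.cos a ^ 2), 3 / 2 * (1 - Real.cos a ^ 2)]) ∧
    (∀ (a b c e l : ℝ), l ∈ Set.Icc (0:ℝ) 1 →
      ((∑ i : Fin 3,
          l • (R ^ (i : ℕ) * Matrix.vecMulVec (Ψ a b) (Ψ a b) * (R⁻¹) ^ (i : ℕ)))
        + (∑ i : Fin 3,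
          (1 - l) • (R ^ (i : ℕ) * Matrix.vecMulVec (Ψ c e) (Ψ c e) * (R⁻¹) ^ (i : ℕ)))
        = 1
        ↔ l * Real.cos a ^ 2 + (1 - l) * Real.cos c ^ 2 = 1 / 3)) := by
  have hRm : R = Rm := hR
  subst hRm
  simp only [hΨ]
  refine ⟨orbit, ?_⟩
  intro a b c e l _
  rw [← Finset.smul_sum, ← Finset.smul_sum, orbit a b, orbit c e,
    ← Matrix.diagonal_smul, ← Matrix.diagonal_smul, Matrix.diagonal_add,
    ← Matrix.diagonal_one, Matrix.diagonal_injective.eq_iff]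
  constructor
  · intro h
    have h0 := congrFun h 0
    simp [Matrix.smul_cons] at h0
    linarith
  · intro h
    funext i
    fin_cases i <;>
      simp [Matrix.smul_cons, Matrix.vecHead, Matrix.vecTail] <;> linarith
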